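/- arXiv:2001.08567 — 5 statements merged into one kernel-verified Lean document; each statement's English description precedes it below -/
import Mathlib

section
/- Let T be a small triangulated category and H : T → Ab a homological functor (H sends distinguished triangles to exact sequences). Then the category of elements of H is cofiltered; equivalently, H is a filtered colimit of representable functors T(-, X) in the category of additive functors T^op → Ab. -/
open CategoryTheory Limits

/-- For a small (pre)triangulated category `T` and a homological functor
`H : T ⥤ Ab`, the category of elements of `H` is cofiltered (equivalently, `H` is a
filtered colimit of representables in additive presheaves). -/
theorem stmt0 {T : Type} [SmallCategory T] [Preadditive T] [HasZeroObject T]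
    [HasShift T ℤ] [∀ n : ℤ, (CategoryTheory.shiftFunctor T n).Additive]
    [Pretriangulated T]
    (H : T ⥤ AddCommGrpCat.{0}) [H.Additive] [H.IsHomological] :
    IsCofiltered (Functor.Elements (H ⋙ forget AddCommGrpCat)) := by
  open ZeroObject Pretriangulated in
  refine { nonempty := ⟨⟨0, 0⟩⟩, cone_objs := ?_, cone_maps := ?_ }
  · rintro ⟨X, x⟩ ⟨Y, y⟩
    refine ⟨⟨X ⊞ Y, H.map biprod.inl x + H.map biprod.inr y⟩,
      ⟨biprod.fst, ?_⟩, ⟨biprod.snd, ?_⟩, trivial⟩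
    · show H.map biprod.fst (H.map biprod.inl x + H.map biprod.inr y) = x
      have h1 : H.map (biprod.inl : X ⟶ X ⊞ Y) ≫ H.map biprod.fst = 𝟙 _ := by
        rw [← H.map_comp, biprod.inl_fst, H.map_id]
      have h2 : H.map (biprod.inr : Y ⟶ X ⊞ Y) ≫ H.map biprod.fst = 0 := by
        rw [← H.map_comp, biprod.inr_fst, H.map_zero]
      rw [map_add]
      have e1 := ConcreteCategory.congr_hom h1 x
      have e2 := ConcreteCategory.congr_hom h2 y
      simp only [ConcreteCategory.comp_apply, ConcreteCategory.id_apply] at e1 e2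
      rw [e1, e2]
      simp
    · show H.map biprod.snd (H.map biprod.inl x + H.map biprod.inr y) = y
      have h1 : H.map (biprod.inl : X ⟶ X ⊞ Y) ≫ H.map biprod.snd = 0 := by
        rw [← H.map_comp, biprod.inl_snd, H.map_zero]
      have h2 : H.map (biprod.inr : Y ⟶ X ⊞ Y) ≫ H.map biprod.snd = 𝟙 _ := by
        rw [← H.map_comp, biprod.inr_snd, H.map_id]
      rw [map_add]
      have e1 := ConcreteCategory.congr_hom h1 x
      have e2 := ConcreteCategory.congr_hom h2 y
      simp only [ConcreteCategory.comp_apply, ConcreteCategory.id_apply] at e1 e2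
      rw [e1, e2]
      simp
  · rintro ⟨X, x⟩ ⟨Y, y⟩ f g
    obtain ⟨Z, g', h', hT⟩ := distinguished_cocone_triangle (f.1 - g.1)
    have hT' := inv_rot_of_distTriang _ hT
    set T' := (Triangle.mk (f.1 - g.1) g' h').invRotate with hT'def
    have hx : H.map T'.mor₂ x = 0 := by
      change ConcreteCategory.hom (H.map (f.1 - g.1)) x = 0
      rw [H.map_sub]
      have hf : H.map f.1 x = y := f.2
      have hg : H.map g.1 x = y := g.2
      change (H.map f.1 - H.map g.1) x = 0
      show H.map f.1 x - H.map g.1 x = 0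
      rw [hf, hg, sub_self]
    have hexact := (H.map_distinguished_exact T' hT')
    rw [ShortComplex.ab_exact_iff] at hexact
    obtain ⟨a, ha⟩ := hexact x hx
    refine ⟨⟨T'.obj₁, a⟩, ⟨T'.mor₁, ha⟩, ?_⟩
    apply Subtype.ext
    have hz := comp_distTriang_mor_zero₁₂ T' hT'
    have : T'.mor₁ ≫ f.1 = T'.mor₁ ≫ g.1 :=
      sub_eq_zero.mp ((Preadditive.comp_sub _ _ _).symm.trans hz)
    exact this
end

section
/- Let T be a rigid ⊗-triangulated category and H : T → A a Künneth functor. Then H-epimorphisms (morphisms p with Hp an epimorphism) are stable under homotopy pullback: if p : A → B is an H-epimorphism and g : B' → B is any morphism, then in any homotopy pullback square over (p, g) the morphism opposite to p is again an H-epimorphism, and H sends the square to a pullback square in A. -/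
open CategoryTheory Limits Pretriangulated MonoidalCategory

private def natiso_aux {V : Type 1} [Category.{0} V] [MonoidalCategory V]
    {Z Z' : V} (w : Z ⊗ Z' ≅ 𝟙_ V) :
    tensorRight Z ⋙ tensorRight Z' ≅ 𝟭 V :=
  NatIso.ofComponents
    (fun X => α_ X Z Z' ≪≫ whiskerLeftIso X w ≪≫ ρ_ X)
    (fun {X Y} u => by
      dsimp
      rw [associator_naturality_left_assoc, whiskerLeftIso_hom, whiskerLeftIso_hom, ← whisker_exchange_assoc]
      simp)

/-- In a rigid ⊗-triangulated category with a Künneth functor `H`,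
`H`-epimorphisms are stable under homotopy pullback: if `p : A ⟶ B` is an
`H`-epimorphism, `g : B' ⟶ B` is any morphism, and `P → A ⊞ B' → B → P[1]` is a
distinguished triangle on `biprod.desc p (-g)` (a homotopy pullback square), then
the morphism of the square opposite to `p` is again an `H`-epimorphism and `H`
sends the square to a pullback square. -/
theorem stmt3 {T : Type} [SmallCategory T] [Preadditive T] [HasZeroObject T]
    [HasShift T ℤ] [∀ n : ℤ, (CategoryTheory.shiftFunctor T n).Additive]
    [Pretriangulated T] [HasBinaryBiproducts T]
    [MonoidalCategory T] [SymmetricCategory T] [RigidCategory T]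
    (e : CategoryTheory.shiftFunctor T (1 : ℤ) ≅ tensorRight ((𝟙_ T)⟦(1 : ℤ)⟧))
    {V : Type 1} [Category.{0} V] [Abelian V] [MonoidalCategory V] [SymmetricCategory V]
    (H : T ⥤ V) [H.Additive] [H.Braided] [H.IsHomological]
    {A B B' P : T} (p : A ⟶ B) (g : B' ⟶ B)
    (hp : Epi (H.map p))
    (f : P ⟶ A ⊞ B') (h : B ⟶ P⟦(1 : ℤ)⟧)
    (hdT : Triangle.mk f (biprod.desc p (-g)) h ∈ distTriang T) :
    Epi (H.map (f ≫ biprod.snd)) ∧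
      IsPullback (H.map (f ≫ biprod.fst)) (H.map (f ≫ biprod.snd))
        (H.map p) (H.map g) := by
  set q : A ⊞ B' ⟶ B := biprod.desc p (-g) with hq
  set D : T := (𝟙_ T)⟦(1 : ℤ)⟧ with hD
  -- basic consequences of the distinguished triangle
  have hfq : f ≫ q = 0 := comp_distTriang_mor_zero₁₂ _ hdT
  have hqh : q ≫ h = 0 := comp_distTriang_mor_zero₂₃ _ hdT
  -- `H q` is an epimorphism
  haveI hHq : Epi (H.map q) := by
    have hfac : H.map biprod.inl ≫ H.map q = H.map p := by
      rw [← H.map_comp, hq, biprod.inl_desc]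
    haveI : Epi (H.map biprod.inl ≫ H.map q) := by rw [hfac]; exact hp
    exact epi_of_epi (H.map biprod.inl) (H.map q)
  -- hence `H h = 0`
  have hHh : H.map h = 0 := by
    have hz : H.map q ≫ H.map h = 0 := by rw [← H.map_comp, hqh, H.map_zero]
    exact zero_of_epi_comp (H.map q) hz
  -- `H (f⟦1⟧)` is a monomorphism, by exactness on the twice-rotated triangle
  haveI hmono1 : Mono (H.map (f⟦(1 : ℤ)⟧')) := by
    have hdT2 := rot_of_distTriang _ (rot_of_distTriang _ hdT)
    have hex2 := H.map_distinguished_exact _ hdT2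
    have hmono : Mono (H.map (-(f⟦(1 : ℤ)⟧'))) := hex2.mono_g (by exact hHh)
    rw [H.map_neg] at hmono
    haveI : IsIso (-(𝟙 (H.obj ((A ⊞ B')⟦(1 : ℤ)⟧)))) :=
      ⟨⟨-(𝟙 _), by simp, by simp⟩⟩
    haveI := hmono
    have heq : H.map (f⟦(1 : ℤ)⟧') = (-(H.map (f⟦(1 : ℤ)⟧'))) ≫ (-(𝟙 _)) := by simp
    rw [heq]
    exact mono_comp _ _
  -- transfer to `H.map (f ▷ D)`
  haveI hmono2 : Mono (H.map (f ▷ D)) := by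
    have hn := e.hom.naturality f
    dsimp only [Functor.flip_obj_map, curriedTensor_map_app] at hn
    have hnat : f ▷ D = inv (e.hom.app P) ≫ (shiftFunctor T (1 : ℤ)).map f ≫
        e.hom.app (A ⊞ B') := by
      rw [hn]; simp
    rw [hnat, H.map_comp, H.map_comp]
    exact mono_comp _ _
  -- transfer to `H.map f ▷ H.obj D`
  haveI hmono3 : Mono (H.map f ▷ H.obj D) := by
    haveI hcomp : Mono (H.map f ▷ H.obj D ≫ Functor.LaxMonoidal.μ H (A ⊞ B') D) := by
      rw [Functor.LaxMonoidal.μ_natural_left]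
      exact mono_comp _ _
    exact mono_of_mono (H.map f ▷ H.obj D) (Functor.LaxMonoidal.μ H (A ⊞ B') D)
  -- `tensorRight (H.obj D)` is faithful, since `H.obj D` is invertible
  have wIso : H.obj D ⊗ H.obj ((𝟙_ T)⟦(-1 : ℤ)⟧) ≅ 𝟙_ V := by
    refine (β_ _ _) ≪≫ (Functor.Monoidal.μIso H _ _) ≪≫
      H.mapIso ?_ ≪≫ (Functor.Monoidal.εIso H).symm
    exact (e.app ((𝟙_ T)⟦(-1 : ℤ)⟧)).symm ≪≫
      (shiftFunctorCompIsoId T (-1 : ℤ) (1 : ℤ) (by norm_num)).app (𝟙_ T)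
  haveI hfaith : (tensorRight (H.obj D)).Faithful :=
    Functor.Faithful.of_comp_iso (natiso_aux wIso)
  haveI hmonoHf : Mono (H.map f) := by
    apply (tensorRight (H.obj D)).mono_of_mono_map
    exact hmono3
  -- exactness of `H P → H(A ⊞ B') → H B`
  have hex := H.map_distinguished_exact _ hdT
  haveI : Mono (((shortComplexOfDistTriangle _ hdT).map H).f) := hmonoHf
  -- biproduct comparison
  haveI : PreservesBinaryBiproducts H :=
    preservesBinaryBiproducts_of_preservesBiproducts H
  set i : H.obj (A ⊞ B') ≅ H.obj A ⊞ H.obj B' := H.mapBiprod A B' with hi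
  set a : H.obj P ⟶ H.obj A := H.map (f ≫ biprod.fst) with ha
  set b : H.obj P ⟶ H.obj B' := H.map (f ≫ biprod.snd) with hb
  set c : H.obj A ⟶ H.obj B := H.map p with hc
  set d : H.obj B' ⟶ H.obj B := H.map g with hd'
  have hIf : H.map f ≫ i.hom = biprod.lift a b := by
    apply biprod.hom_ext
    · rw [Category.assoc, hi, Functor.mapBiprod_hom, biprod.lift_fst, biprod.lift_fst,
        ← H.map_comp, ha]
    · rw [Category.assoc, hi, Functor.mapBiprod_hom, biprod.lift_snd, biprod.lift_snd,
        ← H.map_comp, hb]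
  have hIq : i.inv ≫ H.map q = biprod.desc c (-d) := by
    apply biprod.hom_ext'
    · rw [← Category.assoc, hi, Functor.mapBiprod_inv, biprod.inl_desc, biprod.inl_desc,
        ← H.map_comp, hq, biprod.inl_desc, hc]
    · rw [← Category.assoc, hi, Functor.mapBiprod_inv, biprod.inr_desc, biprod.inr_desc,
        ← H.map_comp, hq, biprod.inr_desc, H.map_neg, hd']
  have hHf : H.map f = biprod.lift a b ≫ i.inv := by
    rw [← hIf]; simp
  have hHq' : H.map q = i.hom ≫ biprod.desc c (-d) := by
    rw [← hIq]; simp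
  have hzero : biprod.lift a b ≫ biprod.desc c (-d) = 0 := by
    have h0 : H.map f ≫ H.map q = 0 := by rw [← H.map_comp, hfq, H.map_zero]
    rw [hHf, hHq', Category.assoc, Iso.inv_hom_id_assoc] at h0
    exact h0
  have comm : a ≫ c = b ≫ d := by
    have h1 := hzero
    rw [biprod.lift_desc, Preadditive.comp_neg] at h1
    rwa [add_neg_eq_zero] at h1
  -- the universal property
  have hcond : ∀ s : PullbackCone c d,
      (biprod.lift s.fst s.snd ≫ i.inv) ≫
        ((shortComplexOfDistTriangle (Triangle.mk f q h) hdT).map H).g = 0 := by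
    intro s
    show (biprod.lift s.fst s.snd ≫ i.inv) ≫ H.map q = 0
    rw [Category.assoc, hHq', Iso.inv_hom_id_assoc, biprod.lift_desc,
      Preadditive.comp_neg, s.condition, add_neg_cancel]
  have hPB : IsPullback a b c d := by
    refine IsPullback.of_isLimit' ⟨comm⟩ ?_
    refine PullbackCone.IsLimit.mk comm
      (fun s => hex.lift (biprod.lift s.fst s.snd ≫ i.inv) (hcond s))
      (fun s => ?_) (fun s => ?_) (fun s m hm1 hm2 => ?_)
    · have hl : hex.lift (biprod.lift s.fst s.snd ≫ i.inv) (hcond s) ≫ H.map f =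
        biprod.lift s.fst s.snd ≫ i.inv := hex.lift_f _ _
      have haf : a = H.map f ≫ i.hom ≫ biprod.fst := by
        rw [← Category.assoc, hIf, biprod.lift_fst]
      rw [haf]
      exact ((Category.assoc _ _ _).symm.trans (hl =≫ (i.hom ≫ biprod.fst))).trans (by simp)
    · have hl : hex.lift (biprod.lift s.fst s.snd ≫ i.inv) (hcond s) ≫ H.map f =
        biprod.lift s.fst s.snd ≫ i.inv := hex.lift_f _ _
      have hbf : b = H.map f ≫ i.hom ≫ biprod.snd := by
        rw [← Category.assoc, hIf, biprod.lift_snd]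
      rw [hbf]
      exact ((Category.assoc _ _ _).symm.trans (hl =≫ (i.hom ≫ biprod.snd))).trans (by simp)
    · have hl : hex.lift (biprod.lift s.fst s.snd ≫ i.inv) (hcond s) ≫ H.map f =
        biprod.lift s.fst s.snd ≫ i.inv := hex.lift_f _ _
      refine (cancel_mono (H.map f)).1 (Eq.trans ?_ hl.symm)
      rw [hHf, ← Category.assoc]
      congr 1
      apply biprod.hom_ext
      · rw [Category.assoc, biprod.lift_fst, biprod.lift_fst]
        exact hm1
      · rw [Category.assoc, biprod.lift_snd, biprod.lift_snd]
        exact hm2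
  refine ⟨?_, hPB⟩
  -- epimorphism part: pullback of an epi is an epi in an abelian category
  haveI : Epi c := hp
  have hepi : Epi (hPB.isoPullback.hom ≫ pullback.snd c d) := epi_comp _ _
  rwa [hPB.isoPullback_hom_snd] at hepi
end

section
/- Let T be a rigid ⊗-triangulated category and H a Künneth functor to graded K-vector spaces. If j : S → T(-,X) is a subfunctor of a representable presheaf such that j ⊗_T H is an isomorphism, then there exists an H-epimorphism p : Y → X such that T(-,p) factors through j. -/
open CategoryTheory Limits Pretriangulated MonoidalCategory

section Aux
open Functor.LaxMonoidal Functor.OplaxMonoidal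

lemma stmt4_zigzag {C D : Type*} [Category C] [Category D] [MonoidalCategory C]
    [MonoidalCategory D] (F : C ⥤ D) [F.Monoidal] (X Y : C) [ExactPairing X Y] :
    (ε F ≫ F.map (η_ X Y) ≫ δ F X Y) ▷ F.obj X ≫ (α_ _ _ _).hom ≫
      F.obj X ◁ (μ F Y X ≫ F.map (ε_ X Y) ≫ η F) =
      (λ_ (F.obj X)).hom ≫ (ρ_ (F.obj X)).inv := by
  have key : μ F (X ⊗ Y) X ≫ F.map (α_ X Y X).hom ≫ δ F X (Y ⊗ X) =
      (δ F X Y ▷ F.obj X) ≫ (α_ _ _ _).hom ≫ (F.obj X ◁ μ F Y X) := by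
    rw [Functor.Monoidal.map_associator]
    simp only [Category.assoc, Functor.Monoidal.μ_δ_assoc, Functor.Monoidal.μ_δ,
      Category.comp_id]
  calc (ε F ≫ F.map (η_ X Y) ≫ δ F X Y) ▷ F.obj X ≫ (α_ _ _ _).hom ≫
        F.obj X ◁ (μ F Y X ≫ F.map (ε_ X Y) ≫ η F)
      = ε F ▷ F.obj X ≫ F.map (η_ X Y) ▷ F.obj X ≫
          ((δ F X Y ▷ F.obj X) ≫ (α_ _ _ _).hom ≫ (F.obj X ◁ μ F Y X)) ≫
          F.obj X ◁ F.map (ε_ X Y) ≫ F.obj X ◁ η F := by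
        simp [MonoidalCategory.comp_whiskerRight, MonoidalCategory.whiskerLeft_comp]
    _ = ε F ▷ F.obj X ≫ (F.map (η_ X Y) ▷ F.obj X ≫ μ F (X ⊗ Y) X) ≫
          F.map (α_ X Y X).hom ≫ (δ F X (Y ⊗ X) ≫ F.obj X ◁ F.map (ε_ X Y)) ≫
          F.obj X ◁ η F := by rw [← key]; simp
    _ = ε F ▷ F.obj X ≫ μ F (𝟙_ C) X ≫ F.map (η_ X Y ▷ X) ≫
          F.map (α_ X Y X).hom ≫ F.map (X ◁ ε_ X Y) ≫ δ F X (𝟙_ C) ≫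
          F.obj X ◁ η F := by
        rw [μ_natural_left, δ_natural_right]; simp
    _ = (λ_ (F.obj X)).hom ≫ (ρ_ (F.obj X)).inv := by
        have w' : F.map (η_ X Y ▷ X) ≫ F.map (α_ X Y X).hom ≫ F.map (X ◁ ε_ X Y) =
            F.map (λ_ X).hom ≫ F.map (ρ_ X).inv := by
          simpa only [Functor.map_comp] using
            congrArg F.map (ExactPairing.evaluation_coevaluation X Y)
        rw [reassoc_of% w', Functor.Monoidal.map_rightUnitor_inv,
          Functor.Monoidal.map_leftUnitor]
        simp

lemma stmt4_finite {K : Type} [Field K] {C : Type*} [Category C] [MonoidalCategory C]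
    (F : C ⥤ ModuleCat.{0} K) [F.Monoidal] (X Y : C) [ExactPairing X Y] :
    Module.Finite K (F.obj X) := by
  set A := F.obj X with hA
  set B := F.obj Y with hB
  set cv : 𝟙_ (ModuleCat K) ⟶ A ⊗ B := ε F ≫ F.map (η_ X Y) ≫ δ F X Y with hcv
  set ev : B ⊗ A ⟶ 𝟙_ (ModuleCat K) := μ F Y X ≫ F.map (ε_ X Y) ≫ η F with hev
  have zz : cv ▷ A ≫ (α_ A B A).hom ≫ A ◁ ev = (λ_ A).hom ≫ (ρ_ A).inv :=
    stmt4_zigzag F X Y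
  obtain ⟨s, hs⟩ := TensorProduct.exists_finset (cv (1 : K))
  have key : ∀ a : A, a = ∑ p ∈ s, ev (p.2 ⊗ₜ[K] a) • p.1 := by
    intro a
    have h : (cv ▷ A ≫ (α_ A B A).hom ≫ A ◁ ev) ((1 : K) ⊗ₜ[K] a) =
        ((λ_ A).hom ≫ (ρ_ A).inv) ((1 : K) ⊗ₜ[K] a) := by rw [zz]
    simp only [ConcreteCategory.comp_apply, Function.comp_apply] at h
    rw [ModuleCat.MonoidalCategory.whiskerRight_apply] at h
    rw [hs, TensorProduct.sum_tmul, map_sum, map_sum] at h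
    simp only [ModuleCat.MonoidalCategory.associator_hom_apply,
      ModuleCat.MonoidalCategory.whiskerLeft_apply,
      ModuleCat.MonoidalCategory.leftUnitor_hom_apply, one_smul,
      ModuleCat.MonoidalCategory.rightUnitor_inv_apply] at h
    have h2 := congrArg (TensorProduct.rid K A) h
    simp only [map_sum, TensorProduct.rid_tmul, one_smul] at h2
    have h3 : ∀ (x : ↑A) (y : ↑B),
        (TensorProduct.rid K A) ((A ◁ ev) (x ⊗ₜ[K] (y ⊗ₜ[K] a))) = ev (y ⊗ₜ[K] a) • x := by
      intro x y
      rw [ModuleCat.MonoidalCategory.whiskerLeft_apply]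
      exact TensorProduct.rid_tmul _ _
    conv_lhs => rw [← h2]
    exact Finset.sum_congr rfl fun p _ => (h3 p.1 p.2)
  constructor
  rw [Submodule.fg_def]
  refine ⟨_, (s.finite_toSet.image Prod.fst), ?_⟩
  rw [eq_top_iff]
  intro a _
  rw [key a]
  exact Submodule.sum_mem _ fun p hp => Submodule.smul_mem _ _
    (Submodule.subset_span ⟨p, hp, rfl⟩)

end Aux

set_option maxHeartbeats 1000000 in
/-- Let `T` be a rigid ⊗-triangulated category, `H` a Künneth functor to
(graded) `K`-vector spaces and `- ⊗_T H` (the functor `E` below) the left Kan extension of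
`H` along the additive Yoneda embedding.  If `j : S ⟶ T(-,X)` is a subfunctor of a
representable presheaf such that `j ⊗_T H` is an isomorphism, then there exists an
`H`-epimorphism `p : Y ⟶ X` such that `T(-,p)` factors through `j`. -/
theorem stmt4 {T : Type} [SmallCategory T] [Preadditive T] [HasZeroObject T]
    [HasShift T ℤ] [∀ n : ℤ, (CategoryTheory.shiftFunctor T n).Additive]
    [Pretriangulated T]
    [MonoidalCategory T] [SymmetricCategory T] [RigidCategory T]
    (e : CategoryTheory.shiftFunctor T (1 : ℤ) ≅ tensorRight ((𝟙_ T)⟦(1 : ℤ)⟧))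
    {K : Type} [Field K]
    (H : T ⥤ ModuleCat.{0} K) [H.Additive] [H.Braided] [H.IsHomological]
    (E : (Tᵒᵖ ⥤ AddCommGrpCat.{0}) ⥤ ModuleCat.{0} K)
    (α : H ⟶ preadditiveYoneda ⋙ E) [E.IsLeftKanExtension α]
    {X : T} {S : Tᵒᵖ ⥤ AddCommGrpCat.{0}} (j : S ⟶ preadditiveYoneda.obj X)
    [Mono j] (hj : IsIso (E.map j)) :
    ∃ (Y : T) (p : Y ⟶ X), Epi (H.map p) ∧
      ∃ u : preadditiveYoneda.obj Y ⟶ S, u ≫ j = preadditiveYoneda.map p := by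
  classical
  haveI : Module.Finite K ↥(H.obj X) := stmt4_finite H X (Xᘁ)
  haveI : HasFiniteProducts T := hasFiniteProducts_of_has_binary_and_terminal
  haveI : HasFiniteBiproducts T := HasFiniteBiproducts.of_hasFiniteProducts
  haveI Ladd : (preadditiveYoneda (C := T)).Additive := by
    constructor
    intro A B f g
    ext Z x
    simp [preadditiveYoneda, Preadditive.comp_add, AddMonoidHom.add_apply]
    exact Preadditive.comp_add _ _ _ _ _ _
  have hP : (Functor.LeftExtension.mk E α).IsPointwiseLeftKanExtension :=
    Functor.isPointwiseLeftKanExtensionOfIsLeftKanExtension E α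
  haveI hα : IsIso (α.app X) := (hP ((preadditiveYoneda (C := T)).obj X)).isIso_hom_app
  let L := preadditiveYoneda (C := T)
  let φ : ∀ g : CostructuredArrow (preadditiveYoneda (C := T)) S, g.left ⟶ X :=
    fun g => preadditiveYoneda.preimage (g.hom ≫ j)
  have hφ : ∀ g, preadditiveYoneda.map (φ g) = g.hom ≫ j :=
    fun g => Functor.map_preimage _ _
  have hnat : ∀ g, H.map (φ g) ≫ α.app X = α.app g.left ≫ E.map (g.hom ≫ j) := by
    intro g
    have h := α.naturality (φ g)
    rw [Functor.comp_map, hφ g] at h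
    exact h
  let N : Submodule K ↥(H.obj X) := ⨆ g, LinearMap.range (H.map (φ g)).hom
  let q : H.obj X ⟶ ModuleCat.of K (↥(H.obj X) ⧸ N) := ModuleCat.ofHom N.mkQ
  have hcomp : ∀ g, H.map (φ g) ≫ q = 0 := by
    intro g
    refine ModuleCat.hom_ext (LinearMap.ext fun y => ?_)
    exact (Submodule.Quotient.mk_eq_zero N).2
      (le_iSup (fun g => LinearMap.range (H.map (φ g)).hom) g (LinearMap.mem_range_self _ y))
  have hq : E.map j ≫ inv (α.app X) ≫ q = 0 := by
    apply (hP S).hom_ext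
    intro g
    have happ : ((Functor.LeftExtension.mk E α).coconeAt S).ι.app g =
        α.app g.left ≫ E.map g.hom := rfl
    change (α.app g.left ≫ E.map g.hom) ≫ _ = (α.app g.left ≫ E.map g.hom) ≫ 0
    rw [comp_zero, Category.assoc, ← Functor.map_comp_assoc,
      ← reassoc_of% (hnat g), IsIso.hom_inv_id_assoc, hcomp g]
  have hq0 : q = 0 := by
    have h2 : inv (α.app X) ≫ q = 0 := by
      rw [← cancel_epi (E.map j), comp_zero]
      simpa using hq
    rw [← cancel_epi (inv (α.app X)), comp_zero]
    simpa using h2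
  have hN : ∀ x : ↥(H.obj X), x ∈ N := by
    intro x
    have hx0 : q x = 0 := by rw [hq0]; rfl
    exact (Submodule.Quotient.mk_eq_zero N).1 hx0
  obtain ⟨t, ht⟩ := Module.Finite.fg_top (R := K) (M := ↥(H.obj X))
  have hx : ∀ x : ↥(H.obj X), ∃ s : Finset (CostructuredArrow (preadditiveYoneda (C := T)) S),
      x ∈ ⨆ g ∈ s, LinearMap.range (H.map (φ g)).hom :=
    fun x => Submodule.mem_iSup_iff_exists_finset.mp (hN x)
  choose f hf using hx
  let s : Finset (CostructuredArrow (preadditiveYoneda (C := T)) S) := t.biUnion f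
  let Z : ↥s → T := fun i => (i : CostructuredArrow (preadditiveYoneda (C := T)) S).left
  let p : (⨁ Z) ⟶ X := biproduct.desc fun i =>
    φ (i : CostructuredArrow (preadditiveYoneda (C := T)) S)
  have hle : ∀ i : ↥s,
      LinearMap.range (H.map (φ (i : CostructuredArrow (preadditiveYoneda (C := T)) S))).hom ≤
      LinearMap.range (H.map p).hom := by
    intro i
    rintro y ⟨z, rfl⟩
    refine ⟨H.map (biproduct.ι Z i) z, ?_⟩
    have hι : biproduct.ι Z i ≫ p = φ (i : CostructuredArrow (preadditiveYoneda (C := T)) S) :=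
      biproduct.ι_desc _ _
    rw [← hι, H.map_comp]
    rfl
  refine ⟨⨁ Z, p, ?_, ?_⟩
  · rw [ModuleCat.epi_iff_surjective, ← LinearMap.range_eq_top, eq_top_iff]
    intro x _
    have hxt : x ∈ Submodule.span K (t : Set ↥(H.obj X)) := by rw [ht]; trivial
    refine Submodule.span_le.2 ?_ hxt
    intro y hy
    have hmono : (⨆ g ∈ f y, LinearMap.range (H.map (φ g)).hom) ≤
        ⨆ g ∈ s, LinearMap.range (H.map (φ g)).hom :=
      biSup_mono fun g hg => Finset.subset_biUnion_of_mem f hy hg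
    have hls : (⨆ g ∈ s, LinearMap.range (H.map (φ g)).hom) ≤ LinearMap.range (H.map p).hom :=
      iSup₂_le fun g hg => hle ⟨g, hg⟩
    exact hls (hmono (hf y))
  · refine ⟨∑ i : ↥s, preadditiveYoneda.map (biproduct.π Z i) ≫
      (i : CostructuredArrow (preadditiveYoneda (C := T)) S).hom, ?_⟩
    have hdesc : ∑ i : ↥s, biproduct.π Z i ≫
        φ (i : CostructuredArrow (preadditiveYoneda (C := T)) S) = p := by
      refine biproduct.hom_ext' _ _ fun i => ?_
      simp [Preadditive.comp_sum, biproduct.ι_π_assoc, dite_comp, Finset.sum_dite_eq,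
        Finset.mem_attach, p]
    have hterm : ∀ i : ↥s, (preadditiveYoneda.map (biproduct.π Z i) ≫
        (i : CostructuredArrow (preadditiveYoneda (C := T)) S).hom) ≫ j =
        preadditiveYoneda.map (biproduct.π Z i ≫
          φ (i : CostructuredArrow (preadditiveYoneda (C := T)) S)) := by
      intro i
      rw [Category.assoc, ← hφ, ← Functor.map_comp]
    rw [Preadditive.sum_comp, Finset.sum_congr rfl fun i _ => hterm i,
      ← Functor.map_sum, hdesc]
end

section
/- Let T be a rigid ⊗-triangulated category and H a Künneth functor to graded K-vector spaces. An additive presheaf G : T^op → Ab is a sheaf for the Grothendieck topology generated by H-epimorphisms if and only if for every distinguished triangle F →^f X →^p Y → F[1] with Hp an epimorphism, the sequence 0 → GY → GX → GF is exact in Ab. -/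
open CategoryTheory Limits Pretriangulated MonoidalCategory Opposite

/-- The sheaf condition for the additive Grothendieck topology generated by the singleton
coverage of `H`-epimorphisms:  for every `H`-epimorphism `p : Y ⟶ X`, the sequence
`0 → GX → GY → ∏_{f : Z → Y, f ≫ p = 0} GZ` is exact. -/
def IsAdditiveHSheaf {T : Type} [SmallCategory T] [Preadditive T] [HasZeroObject T]
    [HasShift T ℤ] [∀ n : ℤ, (CategoryTheory.shiftFunctor T n).Additive]
    [Pretriangulated T] {V : Type 1} [Category.{0} V] [Preadditive V]
    (H : T ⥤ V) (G : Tᵒᵖ ⥤ AddCommGrpCat.{0}) : Prop :=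
  ∀ ⦃X Y : T⦄ (p : Y ⟶ X), Epi (H.map p) →
    Function.Injective (G.map p.op) ∧
      ∀ y : G.obj (op Y),
        (∀ (Z : T) (f : Z ⟶ Y), f ≫ p = 0 → G.map f.op y = 0) →
          ∃ x : G.obj (op X), G.map p.op x = y

/-- Let `T` be a rigid ⊗-triangulated category and `H` a Künneth functor to
(graded) `K`-vector spaces.  An additive presheaf `G : Tᵒᵖ ⥤ Ab` is a sheaf for the
topology generated by `H`-epimorphisms if and only if for every distinguished triangle
`F → X → Y → F[1]` with `H(X → Y)` an epimorphism, the sequence `0 → GY → GX → GF`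
is exact. -/
theorem stmt5 {T : Type} [SmallCategory T] [Preadditive T] [HasZeroObject T]
    [HasShift T ℤ] [∀ n : ℤ, (CategoryTheory.shiftFunctor T n).Additive]
    [Pretriangulated T]
    [MonoidalCategory T] [SymmetricCategory T] [RigidCategory T]
    (e : CategoryTheory.shiftFunctor T (1 : ℤ) ≅ tensorRight ((𝟙_ T)⟦(1 : ℤ)⟧))
    {K : Type} [Field K]
    (H : T ⥤ ModuleCat.{0} K) [H.Additive] [H.Braided] [H.IsHomological]
    (G : Tᵒᵖ ⥤ AddCommGrpCat.{0}) [G.Additive] :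
    IsAdditiveHSheaf H G ↔
      ∀ (dT : Triangle T), dT ∈ (distTriang T) → Epi (H.map dT.mor₂) →
        Function.Injective (G.map dT.mor₂.op) ∧
          Function.Exact (G.map dT.mor₂.op) (G.map dT.mor₁.op) := by
  constructor
  · intro hG dT hdT hepi
    obtain ⟨hinj, hsurj⟩ := hG dT.mor₂ hepi
    refine ⟨hinj, fun y => ?_⟩
    constructor
    · intro hy
      refine hsurj y (fun Z f hf => ?_)
      obtain ⟨g, rfl⟩ := Triangle.coyoneda_exact₂ dT hdT f hf
      rw [op_comp, G.map_comp]
      change G.map g.op (G.map dT.mor₁.op y) = 0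
      rw [hy, map_zero]
    · rintro ⟨x, rfl⟩
      change (G.map dT.mor₂.op ≫ G.map dT.mor₁.op) x = 0
      rw [← G.map_comp, ← op_comp, comp_distTriang_mor_zero₁₂ dT hdT]
      simp
  · intro hT X Y p hepi
    obtain ⟨F, f, h, hd⟩ := distinguished_cocone_triangle₁ p
    obtain ⟨hinj, hex⟩ := hT _ hd hepi
    refine ⟨hinj, fun y hy => ?_⟩
    exact (hex y).1 (hy F f (comp_distTriang_mor_zero₁₂ _ hd))
end

section
/- Let T be a rigid ⊗-triangulated category and H : T → graded K-vector spaces a Künneth functor. Then the functor sending a graded vector space V to the presheaf X ↦ Hom(HX, V) takes values in the category of sheaves Sh_H(T) for the topology generated by H-epimorphisms. -/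
open CategoryTheory Limits Pretriangulated MonoidalCategory Opposite

/-- For a rigid ⊗-triangulated `T` and a Künneth functor
`H : T ⥤ (graded K-vector spaces)`, the functor sending a vector space `V` to the
presheaf `X ↦ Hom(HX, V)` takes values in the category of sheaves for the topology
generated by `H`-epimorphisms. -/
theorem stmt6 {T : Type} [SmallCategory T] [Preadditive T] [HasZeroObject T]
    [HasShift T ℤ] [∀ n : ℤ, (CategoryTheory.shiftFunctor T n).Additive]
    [Pretriangulated T]
    [MonoidalCategory T] [SymmetricCategory T] [RigidCategory T]
    (e : CategoryTheory.shiftFunctor T (1 : ℤ) ≅ tensorRight ((𝟙_ T)⟦(1 : ℤ)⟧))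
    {K : Type} [Field K]
    (H : T ⥤ ModuleCat.{0} K) [H.Additive] [H.Braided] [H.IsHomological]
    (V : ModuleCat.{0} K) :
    IsAdditiveHSheaf H (H.op ⋙ preadditiveYoneda.obj V) := by
  intro X Y p hp
  constructor
  · intro a b hab
    have : H.map p ≫ a = H.map p ≫ b := by
      exact hab
    exact (cancel_epi (H.map p)).mp this
  · intro y hy
    let φ : H.obj Y ⟶ V := y
    obtain ⟨Z, g, h, hT⟩ := Pretriangulated.distinguished_cocone_triangle p
    have hT' := inv_rot_of_distTriang _ hT
    set T' := (Triangle.mk p g h).invRotate with hT'def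
    have hexact := H.map_distinguished_exact _ hT'
    rw [ShortComplex.moduleCat_exact_iff] at hexact
    have hzero : T'.mor₁ ≫ p = 0 := comp_distTriang_mor_zero₁₂ _ hT'
    have hker : LinearMap.ker (H.map p).hom ≤ LinearMap.ker φ.hom := by
      intro v hv
      obtain ⟨w, hw⟩ := hexact v hv
      have hcomp : H.map T'.mor₁ ≫ φ = 0 := hy _ T'.mor₁ hzero
      have : φ (H.map T'.mor₁ w) = 0 := by
        have := LinearMap.congr_fun (R := K) (congrArg ModuleCat.Hom.hom hcomp) w
        exact this
      simp only [LinearMap.mem_ker]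
      rw [← hw]
      exact this
    have hsurj := (ModuleCat.epi_iff_surjective (H.map p)).mp hp
    let eq := LinearMap.quotKerEquivOfSurjective (H.map p).hom hsurj
    let ψ : H.obj X ⟶ V :=
      ModuleCat.ofHom (((LinearMap.ker (H.map p).hom).liftQ φ.hom hker).comp eq.symm.toLinearMap)
    refine ⟨ψ, ?_⟩
    show H.map p ≫ ψ = φ
    apply ModuleCat.hom_ext
    apply LinearMap.ext
    intro m
    have h1 : eq (Submodule.Quotient.mk m) = H.map p m := rfl
    show ψ (H.map p m) = φ m
    have h2 : eq.symm (H.map p m) = Submodule.Quotient.mk m := by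
      rw [LinearEquiv.symm_apply_eq, h1]
    show ((LinearMap.ker (H.map p).hom).liftQ φ.hom hker) (eq.symm (H.map p m)) = φ m
    rw [h2]
    rfl
end
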